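/- If the quantitative parts of all inputs are pairwise distinct (x_i ≠ x_j for all i ≠ j), then the EzGP covariance matrix Φ with entries Φ_{ij} = σ_0^2 exp(-Σ_k θ_k^{(0)}(x_{ik}-x_{jk})^2) + Σ_{h=1}^q Σ_{l=1}^{m_h} 1[z_{ih}=z_{jh}=l] σ_h^2 exp(-Σ_k θ_{k,l}^{(h)}(x_{ik}-x_{jk})^2) is positive definite. -/

import Mathlib

/-- The EzGP covariance function between two inputs `(x1, z1)` and `(x2, z2)`. -/
noncomputable def ezgpCov {p q : ℕ} {m : Fin q → ℕ}
    (σ0sq : ℝ) (σsq : Fin q → ℝ) (θ0 : Fin p → ℝ)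
    (θ : (h : Fin q) → Fin p → Fin (m h) → ℝ)
    (x1 x2 : Fin p → ℝ) (z1 z2 : (h : Fin q) → Fin (m h)) : ℝ :=
  σ0sq * Real.exp (-∑ k, θ0 k * (x1 k - x2 k) ^ 2) +
    ∑ h, ∑ l, (if z1 h = l ∧ z2 h = l then (1 : ℝ) else 0) *
      (σsq h * Real.exp (-∑ k, θ h k l * (x1 k - x2 k) ^ 2))

open Real Filter MeasureTheory Matrix
lemma exp_lin_indep {n : ℕ} (a d : Fin n → ℝ) (ha : Function.Injective a)
    (h : ∀ s : ℝ, ∑ i, d i * Real.exp (s * a i) = 0) : ∀ i, d i = 0 := by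
  by_contra hc
  push_neg at hc
  obtain ⟨i₁, hi₁⟩ := hc
  set S : Finset (Fin n) := Finset.univ.filter (fun i => d i ≠ 0) with hS
  have hSne : S.Nonempty := ⟨i₁, by simp [hS, hi₁]⟩
  obtain ⟨i₀, hi₀S, hi₀max⟩ := S.exists_max_image a hSne
  have hd₀ : d i₀ ≠ 0 := (Finset.mem_filter.mp hi₀S).2
  have hsum : ∀ s : ℝ, ∑ i ∈ S, d i * Real.exp (s * (a i - a i₀)) = 0 := by
    intro s
    have : ∑ i ∈ S, d i * Real.exp (s * (a i - a i₀))
        = Real.exp (-(s * a i₀)) * ∑ i, d i * Real.exp (s * a i) := by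
      rw [Finset.mul_sum]
      rw [Finset.sum_filter_of_ne (fun i _ hne => by
        intro hdi; exact hne (by simp [hdi]))]
      apply Finset.sum_congr rfl
      intro i _
      rw [mul_comm (Real.exp (-(s * a i₀))), mul_assoc, ← Real.exp_add]
      ring_nf
    rw [this, h s, mul_zero]
  have htend : Tendsto (fun s : ℝ => ∑ i ∈ S, d i * Real.exp (s * (a i - a i₀)))
      atTop (nhds (d i₀)) := by
    have : d i₀ = ∑ i ∈ S, (if i = i₀ then d i₀ else 0) := by
      rw [Finset.sum_ite_eq' S i₀ (fun _ => d i₀)]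
      simp [hi₀S]
    rw [this]
    apply tendsto_finset_sum
    intro i hi
    by_cases hii : i = i₀
    · subst hii
      simp only [if_pos rfl, sub_self, mul_zero, Real.exp_zero, mul_one]
      exact tendsto_const_nhds
    · simp only [if_neg hii]
      have hlt : a i < a i₀ := lt_of_le_of_ne (hi₀max i hi) (fun he => hii (ha he))
      have : Tendsto (fun s : ℝ => s * (a i - a i₀)) atTop atBot :=
        tendsto_id.atTop_mul_const_of_neg (by linarith)
      have := Real.tendsto_exp_atBot.comp this
      simpa using (this.const_mul (d i)).congr (fun s => rfl)
  rw [funext hsum] at htend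
  exact hd₀ (tendsto_nhds_unique tendsto_const_nhds htend).symm

lemma exists_separating_direction {n p : ℕ} (w : Fin n → Fin p → ℝ)
    (hw : Function.Injective w) :
    ∃ v : Fin p → ℝ, Function.Injective (fun i => ∑ k, v k * w i k) := by
  -- bad set: union over pairs i ≠ j of kernels of nonzero functionals
  classical
  set f : Fin n → Fin n → ((Fin p → ℝ) →ₗ[ℝ] ℝ) :=
    fun i j => ∑ k, (w i k - w j k) • LinearMap.proj k with hf
  have hker : ∀ i j, i ≠ j → (volume : Measure (Fin p → ℝ)) (LinearMap.ker (f i j)) = 0 := by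
    intro i j hij
    apply Measure.addHaar_submodule
    intro htop
    apply hij
    apply hw
    funext k
    have : f i j (Pi.single k 1) = 0 := by
      rw [← LinearMap.mem_ker, htop]; trivial
    simp only [hf, LinearMap.sum_apply, LinearMap.smul_apply, LinearMap.proj_apply,
      smul_eq_mul] at this
    rw [Finset.sum_eq_single k (fun b _ hb => by simp [Pi.single_eq_of_ne hb])
      (by simp)] at this
    simp at this
    linarith [this]
  have hbad : (volume : Measure (Fin p → ℝ))
      (⋃ (i : Fin n) (j : Fin n) (_ : i ≠ j), (LinearMap.ker (f i j) : Set (Fin p → ℝ))) = 0 := by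
    refine measure_iUnion_null fun i => measure_iUnion_null fun j => measure_iUnion_null fun hij => hker i j hij
  have huniv : (volume : Measure (Fin p → ℝ)) Set.univ ≠ 0 :=
    (isOpen_univ.measure_pos volume Set.univ_nonempty).ne'
  have : (⋃ (i : Fin n) (j : Fin n) (_ : i ≠ j),
      (LinearMap.ker (f i j) : Set (Fin p → ℝ))) ≠ Set.univ := by
    intro he
    rw [he] at hbad
    exact huniv hbad
  obtain ⟨v, hv⟩ : ∃ v : Fin p → ℝ, v ∉ ⋃ (i : Fin n) (j : Fin n) (_ : i ≠ j),
      (LinearMap.ker (f i j) : Set (Fin p → ℝ)) := by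
    by_contra hcon
    push_neg at hcon
    exact this (Set.eq_univ_of_forall hcon)
  refine ⟨v, fun i j hij => ?_⟩
  by_contra hne
  apply hv
  simp only [Set.mem_iUnion]
  refine ⟨i, j, hne, ?_⟩
  simp only [SetLike.mem_coe, LinearMap.mem_ker, hf, LinearMap.sum_apply, LinearMap.smul_apply,
    LinearMap.proj_apply, smul_eq_mul]
  have : ∑ k, v k * w i k = ∑ k, v k * w j k := hij
  calc ∑ k, (w i k - w j k) * v k = ∑ k, v k * w i k - ∑ k, v k * w j k := by
        rw [← Finset.sum_sub_distrib]; apply Finset.sum_congr rfl; intros; ring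
    _ = 0 := by rw [this, sub_self]

lemma exp_multi_indep {n p : ℕ} (w : Fin n → Fin p → ℝ) (hw : Function.Injective w)
    (d : Fin n → ℝ) (h : ∀ t : Fin p → ℝ, ∑ i, d i * Real.exp (∑ k, t k * w i k) = 0) :
    ∀ i, d i = 0 := by
  obtain ⟨v, hv⟩ := exists_separating_direction w hw
  apply exp_lin_indep _ d hv
  intro s
  have := h (s • v)
  simp only [Pi.smul_apply, smul_eq_mul, mul_assoc] at this
  simpa only [Finset.mul_sum, mul_assoc] using this

lemma gauss_indep {n p : ℕ} (x : Fin n → Fin p → ℝ) (hx : Function.Injective x)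
    (θ : Fin p → ℝ) (hθ : ∀ k, 0 < θ k) (c : Fin n → ℝ)
    (h : ∀ t : Fin p → ℝ, ∑ i, c i * Real.exp (-∑ k, 2 * θ k * (t k - x i k) ^ 2) = 0) :
    ∀ i, c i = 0 := by
  set w : Fin n → Fin p → ℝ := fun i k => 4 * θ k * x i k with hw
  have hwinj : Function.Injective w := by
    intro i j hij
    apply hx
    funext k
    have : 4 * θ k * x i k = 4 * θ k * x j k := congrFun hij k
    have h4 : (4 : ℝ) * θ k ≠ 0 := by have := hθ k; positivity
    exact mul_left_cancel₀ h4 this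
  set d : Fin n → ℝ := fun i => c i * Real.exp (-∑ k, 2 * θ k * x i k ^ 2) with hd
  have hind : ∀ i, d i = 0 := by
    apply exp_multi_indep w hwinj
    intro t
    have key : ∀ i, d i * Real.exp (∑ k, t k * w i k)
        = Real.exp (∑ k, 2 * θ k * t k ^ 2) *
          (c i * Real.exp (-∑ k, 2 * θ k * (t k - x i k) ^ 2)) := by
      intro i
      rw [hd]
      rw [mul_assoc, ← Real.exp_add, mul_comm (Real.exp _), mul_assoc, ← Real.exp_add]
      congr 2
      rw [← Finset.sum_neg_distrib, ← Finset.sum_neg_distrib, ← Finset.sum_add_distrib,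
        ← Finset.sum_add_distrib]
      exact Finset.sum_congr rfl fun k _ => by simp only [hw]; ring
    calc ∑ i, d i * Real.exp (∑ k, t k * w i k)
        = Real.exp (∑ k, 2 * θ k * t k ^ 2) *
          ∑ i, c i * Real.exp (-∑ k, 2 * θ k * (t k - x i k) ^ 2) := by
          rw [Finset.mul_sum]; exact Finset.sum_congr rfl fun i _ => key i
      _ = 0 := by rw [h t, mul_zero]
  intro i
  have := hind i
  rw [hd] at this
  rcases mul_eq_zero.mp this with h1 | h2
  · exact h1
  · exact absurd h2 (Real.exp_ne_zero _)

-- 1D Gaussian pieces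
lemma gauss1d_integrable {θ : ℝ} (hθ : 0 < θ) (u : ℝ) :
    Integrable (fun s : ℝ => Real.exp (-(2 * θ) * (s - u) ^ 2)) := by
  exact (integrable_exp_neg_mul_sq (by linarith)).comp_sub_right u

lemma gauss1d_sq (θ u v s : ℝ) :
    Real.exp (-(2 * θ) * (s - u) ^ 2) * Real.exp (-(2 * θ) * (s - v) ^ 2)
      = Real.exp (-(4 * θ) * (s - (u + v) / 2) ^ 2) * Real.exp (-θ * (u - v) ^ 2) := by
  rw [← Real.exp_add, ← Real.exp_add]
  congr 1
  ring

lemma gauss1d_mul_integrable {θ : ℝ} (hθ : 0 < θ) (u v : ℝ) :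
    Integrable (fun s : ℝ =>
      Real.exp (-(2 * θ) * (s - u) ^ 2) * Real.exp (-(2 * θ) * (s - v) ^ 2)) := by
  apply Integrable.congr (((integrable_exp_neg_mul_sq (show (0:ℝ) < 4 * θ by linarith)).comp_sub_right
    ((u + v) / 2)).mul_const (Real.exp (-θ * (u - v) ^ 2)))
  filter_upwards with s
  rw [gauss1d_sq]

lemma gauss1d_integral {θ : ℝ} (hθ : 0 < θ) (u v : ℝ) :
    ∫ s : ℝ, Real.exp (-(2 * θ) * (s - u) ^ 2) * Real.exp (-(2 * θ) * (s - v) ^ 2)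
      = Real.sqrt (π / (4 * θ)) * Real.exp (-θ * (u - v) ^ 2) := by
  simp_rw [gauss1d_sq θ u v]
  rw [integral_mul_const]
  congr 1
  have := integral_sub_right_eq_self (μ := (volume : Measure ℝ)) (fun s : ℝ => Real.exp (-(4 * θ) * s ^ 2)) ((u + v) / 2)
  rw [this, integral_gaussian]

lemma const_pos {p : ℕ} (θ : Fin p → ℝ) (hθ : ∀ k, 0 < θ k) :
    0 < ∏ k, Real.sqrt (π / (4 * θ k)) := by
  apply Finset.prod_pos
  intro k _
  apply Real.sqrt_pos.mpr
  have := hθ k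
  have := Real.pi_pos
  positivity

section main
variable {n p : ℕ} (x : Fin n → Fin p → ℝ) (θ : Fin p → ℝ)

private noncomputable def Gg (i : Fin n) (t : Fin p → ℝ) : ℝ :=
  ∏ k, Real.exp (-(2 * θ k) * (t k - x i k) ^ 2)

lemma Gg_mul_integrable (hθ : ∀ k, 0 < θ k) (i j : Fin n) :
    Integrable (fun t : Fin p → ℝ => Gg x θ i t * Gg x θ j t) := by
  have : (fun t : Fin p → ℝ => Gg x θ i t * Gg x θ j t) = fun t =>
      ∏ k, (Real.exp (-(2 * θ k) * (t k - x i k) ^ 2) *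
        Real.exp (-(2 * θ k) * (t k - x j k) ^ 2)) := by
    funext t; rw [Gg, Gg, ← Finset.prod_mul_distrib]
  rw [this]
  exact Integrable.fintype_prod fun k => gauss1d_mul_integrable (hθ k) (x i k) (x j k)

lemma Gg_mul_integral (hθ : ∀ k, 0 < θ k) (i j : Fin n) :
    ∫ t : Fin p → ℝ, Gg x θ i t * Gg x θ j t
      = (∏ k, Real.sqrt (π / (4 * θ k))) * Real.exp (-∑ k, θ k * (x i k - x j k) ^ 2) := by
  have h1 : (fun t : Fin p → ℝ => Gg x θ i t * Gg x θ j t) = fun t =>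
      ∏ k, (Real.exp (-(2 * θ k) * (t k - x i k) ^ 2) *
        Real.exp (-(2 * θ k) * (t k - x j k) ^ 2)) := by
    funext t; rw [Gg, Gg, ← Finset.prod_mul_distrib]
  rw [h1, integral_fintype_prod_volume_eq_prod
    (f := fun k s => Real.exp (-(2 * θ k) * (s - x i k) ^ 2) *
      Real.exp (-(2 * θ k) * (s - x j k) ^ 2))]
  have h2 : ∀ k, ∫ s : ℝ, Real.exp (-(2 * θ k) * (s - x i k) ^ 2) *
      Real.exp (-(2 * θ k) * (s - x j k) ^ 2)
      = Real.sqrt (π / (4 * θ k)) * Real.exp (-θ k * (x i k - x j k) ^ 2) :=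
    fun k => gauss1d_integral (hθ k) _ _
  rw [Finset.prod_congr rfl fun k _ => h2 k, Finset.prod_mul_distrib]
  congr 1
  rw [← Real.exp_sum]
  congr 1
  rw [← Finset.sum_neg_distrib]
  exact Finset.sum_congr rfl fun k _ => by ring

lemma Gg_cont (i : Fin n) : Continuous (Gg x θ i) := by
  apply continuous_finset_prod
  intro k _
  apply Real.continuous_exp.comp
  fun_prop

lemma Gg_exp (i : Fin n) (t : Fin p → ℝ) :
    Gg x θ i t = Real.exp (-∑ k, 2 * θ k * (t k - x i k) ^ 2) := by
  rw [Gg, ← Real.exp_sum]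
  congr 1
  rw [← Finset.sum_neg_distrib]
  exact Finset.sum_congr rfl fun k _ => by ring

lemma gauss_posDef (hx : Function.Injective x) (hθ : ∀ k, 0 < θ k) :
    (Matrix.of fun i j : Fin n => Real.exp (-∑ k, θ k * (x i k - x j k) ^ 2)).PosDef := by
  rw [Matrix.posDef_iff_dotProduct_mulVec]
  constructor
  · rw [Matrix.IsHermitian]
    ext i j
    simp only [Matrix.conjTranspose_apply, Matrix.of_apply, star_trivial]
    congr 2
    exact Finset.sum_congr rfl fun k _ => by ring
  · intro c hc
    set C := ∏ k, Real.sqrt (π / (4 * θ k)) with hC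
    have hCpos : 0 < C := const_pos θ hθ
    set F : (Fin p → ℝ) → ℝ := fun t => ∑ i, c i * Gg x θ i t with hF
    -- expansion of F^2
    have hFsq : ∀ t, F t ^ 2 = ∑ i, ∑ j, (c i * c j) * (Gg x θ i t * Gg x θ j t) := by
      intro t
      rw [hF, sq, Finset.sum_mul_sum]
      exact Finset.sum_congr rfl fun i _ => Finset.sum_congr rfl fun j _ => by ring
    have hFsqint : ∫ t : Fin p → ℝ, F t ^ 2
        = ∑ i, ∑ j, (c i * c j) * (C * Real.exp (-∑ k, θ k * (x i k - x j k) ^ 2)) := by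
      calc ∫ t : Fin p → ℝ, F t ^ 2
          = ∫ t : Fin p → ℝ, ∑ i, ∑ j, (c i * c j) * (Gg x θ i t * Gg x θ j t) := by
            exact integral_congr_ae (Eventually.of_forall hFsq)
        _ = ∑ i, ∫ t : Fin p → ℝ, ∑ j, (c i * c j) * (Gg x θ i t * Gg x θ j t) := by
            apply integral_finset_sum
            intro i _
            exact integrable_finset_sum _ fun j _ => (Gg_mul_integrable x θ hθ i j).const_mul _
        _ = ∑ i, ∑ j, ∫ t : Fin p → ℝ, (c i * c j) * (Gg x θ i t * Gg x θ j t) := by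
            exact Finset.sum_congr rfl fun i _ => integral_finset_sum _
              fun j _ => (Gg_mul_integrable x θ hθ i j).const_mul _
        _ = ∑ i, ∑ j, (c i * c j) * (C * Real.exp (-∑ k, θ k * (x i k - x j k) ^ 2)) := by
            refine Finset.sum_congr rfl fun i _ => Finset.sum_congr rfl fun j _ => ?_
            rw [integral_const_mul, Gg_mul_integral x θ hθ i j]
    -- the quadratic form equals C⁻¹ * ∫ F^2
    have hquad : (star c) ⬝ᵥ
        ((Matrix.of fun i j : Fin n => Real.exp (-∑ k, θ k * (x i k - x j k) ^ 2)) *ᵥ c)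
        = C⁻¹ * ∫ t : Fin p → ℝ, F t ^ 2 := by
      rw [hFsqint, Finset.mul_sum]
      simp only [dotProduct, Matrix.mulVec, Matrix.of_apply, star_trivial, Finset.mul_sum]
      apply Finset.sum_congr rfl
      intro i _
      apply Finset.sum_congr rfl
      intro j _
      field_simp
    rw [hquad]
    -- positivity of ∫ F^2
    have hFcont : Continuous F := by
      apply continuous_finset_sum
      intro i _
      exact continuous_const.mul (Gg_cont x θ i)
    have hF2int : Integrable (fun t : Fin p → ℝ => F t ^ 2) := by
      apply Integrable.congr (integrable_finset_sum (μ := (volume : Measure (Fin p → ℝ)))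
        Finset.univ fun i (_ : i ∈ Finset.univ) =>
          integrable_finset_sum Finset.univ fun j (_ : j ∈ Finset.univ) =>
            (Gg_mul_integrable x θ hθ i j).const_mul (c i * c j))
      filter_upwards with t
      exact (hFsq t).symm
    have hnonneg : 0 ≤ ∫ t : Fin p → ℝ, F t ^ 2 :=
      integral_nonneg fun t => sq_nonneg _
    rcases lt_or_eq_of_le hnonneg with hpos | heq
    · positivity
    · exfalso
      apply hc
      have hae : (fun t : Fin p → ℝ => F t ^ 2) =ᵐ[volume] 0 :=
        (integral_eq_zero_iff_of_nonneg (fun t => sq_nonneg _) hF2int).mp heq.symm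
      have hzero : ∀ t, F t = 0 := by
        have := (Continuous.ae_eq_iff_eq volume (by fun_prop : Continuous fun t : Fin p → ℝ => F t ^ 2)
          continuous_const).mp hae
        intro t
        have ht := congrFun this t
        simpa using pow_eq_zero_iff (n := 2) (by norm_num) |>.mp ht
      have : ∀ i, c i = 0 := by
        apply gauss_indep x hx θ hθ
        intro t
        have := hzero t
        rw [hF] at this
        calc ∑ i, c i * Real.exp (-∑ k, 2 * θ k * (t k - x i k) ^ 2)
            = ∑ i, c i * Gg x θ i t :=
              Finset.sum_congr rfl fun i _ => by rw [Gg_exp]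
          _ = 0 := this
      funext i
      exact this i

end main

lemma posDef_smul' {n : ℕ} {M : Matrix (Fin n) (Fin n) ℝ} (hM : M.PosDef) {r : ℝ}
    (hr : 0 < r) : (r • M).PosDef := by
  rw [Matrix.posDef_iff_dotProduct_mulVec] at hM ⊢
  refine ⟨?_, fun c hc => ?_⟩
  · rw [Matrix.IsHermitian, Matrix.conjTranspose_smul, star_trivial, hM.1]
  · rw [Matrix.smul_mulVec, dotProduct_smul, smul_eq_mul]
    exact mul_pos hr (hM.2 hc)

lemma posSemidef_smul' {n : ℕ} {M : Matrix (Fin n) (Fin n) ℝ} (hM : M.PosSemidef) {r : ℝ}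
    (hr : 0 ≤ r) : (r • M).PosSemidef := by
  rw [Matrix.posSemidef_iff_dotProduct_mulVec] at hM ⊢
  refine ⟨?_, fun c => ?_⟩
  · rw [Matrix.IsHermitian, Matrix.conjTranspose_smul, star_trivial, hM.1]
  · rw [Matrix.smul_mulVec, dotProduct_smul, smul_eq_mul]
    exact mul_nonneg hr (hM.2 c)

lemma posSemidef_sum' {n : ℕ} {ι : Type*} (s : Finset ι) (f : ι → Matrix (Fin n) (Fin n) ℝ)
    (h : ∀ i ∈ s, (f i).PosSemidef) : (∑ i ∈ s, f i).PosSemidef :=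
  Finset.sum_induction f _ (fun _ _ ha hb => ha.add hb) Matrix.PosSemidef.zero h

theorem ezgp_cov_posDef_of_distinct {n p q : ℕ} {m : Fin q → ℕ}
    (x : Fin n → Fin p → ℝ) (z : Fin n → (h : Fin q) → Fin (m h))
    (hx : ∀ i j : Fin n, i ≠ j → x i ≠ x j)
    (σ0sq : ℝ) (σsq : Fin q → ℝ) (θ0 : Fin p → ℝ)
    (θ : (h : Fin q) → Fin p → Fin (m h) → ℝ)
    (hσ0 : 0 < σ0sq) (hσ : ∀ h, 0 < σsq h)
    (hθ0 : ∀ k, 0 < θ0 k) (hθ : ∀ h k l, 0 < θ h k l) :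
    (Matrix.of fun i j : Fin n =>
      ezgpCov σ0sq σsq θ0 θ (x i) (x j) (z i) (z j)).PosDef := by
  classical
  have hxinj : Function.Injective x := by
    intro i j hij
    by_contra hne
    exact hx i j hne hij
  -- the component matrices
  set G0 : Matrix (Fin n) (Fin n) ℝ :=
    Matrix.of fun i j : Fin n => Real.exp (-∑ k, θ0 k * (x i k - x j k) ^ 2) with hG0
  set G : (hh : Fin q) → Fin (m hh) → Matrix (Fin n) (Fin n) ℝ :=
    fun hh l => Matrix.of fun i j : Fin n =>
      Real.exp (-∑ k, θ hh k l * (x i k - x j k) ^ 2) with hG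
  set D : (hh : Fin q) → Fin (m hh) → Matrix (Fin n) (Fin n) ℝ :=
    fun hh l => Matrix.diagonal (fun i => if z i hh = l then (1 : ℝ) else 0) with hD
  have hdecomp : (Matrix.of fun i j : Fin n =>
      ezgpCov σ0sq σsq θ0 θ (x i) (x j) (z i) (z j))
      = σ0sq • G0 + ∑ hh, ∑ l, σsq hh • (D hh l * G hh l * (D hh l)ᴴ) := by
    ext i j
    simp only [Matrix.add_apply, Matrix.smul_apply, Matrix.sum_apply, Matrix.of_apply,
      ezgpCov, smul_eq_mul, hG0, hG, hD]
    congr 1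
    apply Finset.sum_congr rfl
    intro hh _
    apply Finset.sum_congr rfl
    intro l _
    have hct : (Matrix.diagonal (fun i => if z i hh = l then (1 : ℝ) else 0))ᴴ
        = Matrix.diagonal (fun i => if z i hh = l then (1 : ℝ) else 0) := by
      rw [Matrix.diagonal_conjTranspose]
      congr 1
    rw [hct, Matrix.mul_diagonal, Matrix.diagonal_mul, Matrix.of_apply]
    by_cases h1 : z i hh = l <;> by_cases h2 : z j hh = l <;> simp [h1, h2] <;> ring
  rw [hdecomp]
  apply Matrix.PosDef.add_posSemidef
  · exact posDef_smul' (gauss_posDef x θ0 hxinj hθ0) hσ0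
  · apply posSemidef_sum'
    intro hh _
    apply posSemidef_sum'
    intro l _
    apply posSemidef_smul' _ (le_of_lt (hσ hh))
    exact ((gauss_posDef x (fun k => θ hh k l) hxinj (fun k => hθ hh k l)).posSemidef).mul_mul_conjTranspose_same
      (D hh l)
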